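/- For every integer n ≥ 0, the minimal cardinality of a finite set generating at level n equals ⌈log(2n+1)/log 3⌉, where ⌈·⌉ is the ceiling function and log is the natural logarithm. That is: there exists a set F generating at level n with #F = ⌈log(2n+1)/log 3⌉, and every set generating at level n has cardinality at least ⌈log(2n+1)/log 3⌉. -/

import Mathlib

/-- A finite set `F ⊆ ℤ ∩ [-n, n]` *generates at level* `n` if every integer `x`
with `|x| ≤ n` can be written as `x = ∑_{j∈F} α(j)·j` for coefficients
`α(j) ∈ {-1,0,1}` whose total mass `∑ |α(j)·j|` is at most `n`. -/
def GeneratesAtLevel (n : ℤ) (F : Finset ℤ) : Prop :=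
  (∀ j ∈ F, -n ≤ j ∧ j ≤ n) ∧
  ∀ x : ℤ, |x| ≤ n →
    ∃ α : ℤ → ℤ, (∀ j ∈ F, α j = -1 ∨ α j = 0 ∨ α j = 1) ∧
      x = ∑ j ∈ F, α j * j ∧ (∑ j ∈ F, |α j * j|) ≤ n

section Aux


-- balanced ternary digits
lemma exists_digits : ∀ (j : ℕ) (y : ℤ), 2 * |y| ≤ 3 ^ j - 1 →
    ∃ α : ℕ → ℤ, (∀ i, α i = -1 ∨ α i = 0 ∨ α i = 1) ∧
      y = ∑ i ∈ Finset.range j, α i * 3 ^ i := by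
  intro j
  induction j with
  | zero =>
    intro y hy
    refine ⟨fun _ => 0, fun i => Or.inr (Or.inl rfl), ?_⟩
    rw [Int.abs_eq_natAbs] at hy
    simp only [pow_zero] at hy
    simp only [Finset.range_zero, Finset.sum_empty]
    omega
  | succ j ih =>
    intro y hy
    set d : ℤ := if y % 3 = 2 then -1 else y % 3 with hd
    have hd3 : d = -1 ∨ d = 0 ∨ d = 1 := by
      have := Int.emod_nonneg y (by norm_num : (3:ℤ) ≠ 0)
      have := Int.emod_lt_of_pos y (by norm_num : (0:ℤ) < 3)
      rcases Nat.lt_or_ge 0 0 with _ | _ <;> omega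
    have hmod : (y - d) % 3 = 0 := by
      have := Int.emod_emod_of_dvd y (by norm_num : (3:ℤ) ∣ 3)
      omega
    set y' : ℤ := (y - d) / 3 with hy'
    have hyy : y = 3 * y' + d := by omega
    have hodd : Odd ((3:ℤ) ^ j) := Odd.pow ⟨1, by norm_num⟩
    obtain ⟨p, hp⟩ := hodd
    have hP1 : (1:ℤ) ≤ 3 ^ j := one_le_pow₀ (by norm_num)
    have hpow : (3:ℤ) ^ (j + 1) = 3 * 3 ^ j := by ring
    have hbound : 2 * |y'| ≤ 3 ^ j - 1 := by
      rw [Int.abs_eq_natAbs] at hy ⊢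
      rw [hpow] at hy
      omega
    obtain ⟨α, hα, hsum⟩ := ih y' hbound
    refine ⟨fun i => if i = 0 then d else α (i - 1), fun i => ?_, ?_⟩
    · by_cases h : i = 0 <;> simp [h] <;> [exact hd3; exact hα (i-1)]
    · rw [Finset.sum_range_succ']
      have h1 : ∑ i ∈ Finset.range j,
          (if i + 1 = 0 then d else α (i + 1 - 1)) * 3 ^ (i + 1)
          = (∑ i ∈ Finset.range j, α i * 3 ^ i) * 3 := by
        rw [Finset.sum_mul]
        refine Finset.sum_congr rfl fun i _ => ?_
        simp only [Nat.succ_ne_zero, if_false, Nat.add_sub_cancel]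
        ring
      rw [h1, ← hsum]
      norm_num
      omega

lemma lower (n : ℤ) (F : Finset ℤ) (hF : GeneratesAtLevel n F) :
    (2 * n + 1).toNat ≤ 3 ^ F.card := by
  obtain ⟨-, hgen⟩ := hF
  choose α hα1 hα2 hα3 using hgen
  have key : (Finset.Icc (-n) n).card ≤ (F.pi (fun _ => ({-1,0,1} : Finset ℤ))).card := by
    apply Finset.card_le_card_of_injOn
      (fun x => fun j _ => if hx : |x| ≤ n then α x hx j else 0)
    · intro x hx
      rw [Finset.mem_coe, Finset.mem_Icc] at hx
      have hx' : |x| ≤ n := abs_le.mpr hx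
      rw [Finset.mem_coe, Finset.mem_pi]
      intro j hj
      beta_reduce
      rw [dif_pos hx']
      have := hα1 x hx' j hj
      simp only [Finset.mem_insert, Finset.mem_singleton]
      tauto
    · intro x hx y hy hxy
      rw [Finset.mem_coe, Finset.mem_Icc] at hx hy
      have hx' : |x| ≤ n := abs_le.mpr hx
      have hy' : |y| ≤ n := abs_le.mpr hy
      simp only at hxy
      have heq : ∀ j ∈ F, α x hx' j = α y hy' j := by
        intro j hj
        have := congrFun (congrFun hxy j) hj
        rwa [dif_pos hx', dif_pos hy'] at this
      rw [hα2 x hx', hα2 y hy']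
      exact Finset.sum_congr rfl fun j hj => by rw [heq j hj]
  rw [Finset.card_pi, Finset.prod_const] at key
  have hc : ({-1,0,1} : Finset ℤ).card = 3 := by decide
  rw [hc] at key
  rwa [Int.card_Icc, show n + 1 - -n = 2*n+1 by ring] at key

lemma upper (n : ℤ) (hn : 0 ≤ n) :
    ∃ F : Finset ℤ, GeneratesAtLevel n F ∧ F.card = Nat.clog 3 (2 * n + 1).toNat := by
  set N : ℕ := (2 * n + 1).toNat with hNdef
  have hNc : (N : ℤ) = 2 * n + 1 := Int.toNat_of_nonneg (by omega)
  rcases Nat.eq_zero_or_pos (Nat.clog 3 N) with hK | hK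
  · -- n = 0
    have h1 : N ≤ 3 ^ Nat.clog 3 N := Nat.le_pow_clog (by norm_num) N
    rw [hK] at h1
    have hn0 : n = 0 := by simp at h1; omega
    refine ⟨∅, ⟨by simp, fun x hx => ?_⟩, by simp [hK]⟩
    refine ⟨fun _ => 0, by simp, by simpa [hn0] using hx, by simp [hn0]⟩
  · obtain ⟨k, hk⟩ : ∃ k, Nat.clog 3 N = k + 1 := ⟨Nat.clog 3 N - 1, by omega⟩
    -- bounds
    have hA' : 3 ^ k < N := by
      have := Nat.lt_clog_iff_pow_lt (b := 3) (x := N) (y := k) (by norm_num)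
      omega
    have hB' : N ≤ 3 ^ (k + 1) := by
      have := Nat.le_pow_clog (b := 3) (by norm_num) N
      rwa [hk] at this
    have hA : (3:ℤ) ^ k < 2 * n + 1 := by
      calc (3:ℤ) ^ k = ((3 ^ k : ℕ) : ℤ) := by push_cast; ring
        _ < (N : ℤ) := by exact_mod_cast hA'
        _ = 2 * n + 1 := hNc
    have hB : 2 * n + 1 ≤ (3:ℤ) ^ (k + 1) := by
      calc (2 * n + 1 : ℤ) = (N : ℤ) := hNc.symm
        _ ≤ ((3 ^ (k+1) : ℕ) : ℤ) := by exact_mod_cast hB'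
        _ = (3:ℤ) ^ (k + 1) := by push_cast; ring
    obtain ⟨M, hM⟩ : ∃ M : ℤ, (3:ℤ) ^ k = 2 * M + 1 := by
      obtain ⟨p, hp⟩ := (Odd.pow ⟨1, by norm_num⟩ : Odd ((3:ℤ) ^ k))
      exact ⟨p, by omega⟩
    have hpowk1 : (3:ℤ) ^ (k + 1) = 3 * (2 * M + 1) := by rw [← hM]; ring
    have hM0 : 0 ≤ M := by have : (1:ℤ) ≤ 3 ^ k := one_le_pow₀ (by norm_num); omega
    have hMn : M < n := by omega
    have hn3M : n ≤ 3 * M + 1 := by omega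
    -- the set
    have hinj : ∀ i ∈ Finset.range k, ∀ j ∈ Finset.range k, (3:ℤ) ^ i = 3 ^ j → i = j := by
      intro i _ j _ h
      by_contra hne
      rcases Nat.lt_or_ge i j with hij | hij
      · have := pow_lt_pow_right₀ (by norm_num : (1:ℤ) < 3) hij; omega
      · have hij' : j < i := by omega
        have := pow_lt_pow_right₀ (by norm_num : (1:ℤ) < 3) hij'; omega
    have hpow_le : ∀ i : ℕ, i < k → (3:ℤ) ^ i ≤ M := by
      intro i hi
      have h1 : (3:ℤ) ^ (i + 1) ≤ 3 ^ k := pow_le_pow_right₀ (by norm_num) (by omega)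
      have h2 : (3:ℤ) ^ (i + 1) = 3 * 3 ^ i := by ring
      have h3 : (1:ℤ) ≤ 3 ^ i := one_le_pow₀ (by norm_num)
      omega
    set T : Finset ℤ := (Finset.range k).image (fun i => (3:ℤ)^i) with hT
    have hnotmem : M - n ∉ T := by
      rw [hT, Finset.mem_image]
      rintro ⟨i, -, hi⟩
      have : (1:ℤ) ≤ 3 ^ i := one_le_pow₀ (by norm_num)
      omega
    have hdisj : Disjoint T ({M - n} : Finset ℤ) := by
      rw [Finset.disjoint_singleton_right]; exact hnotmem
    refine ⟨T ∪ {M - n}, ⟨?_, ?_⟩, ?_⟩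
    · -- elements in range
      intro j hj
      rcases Finset.mem_union.mp hj with hj | hj
      · rw [hT, Finset.mem_image] at hj
        obtain ⟨i, hi, rfl⟩ := hj
        have h1 := hpow_le i (Finset.mem_range.mp hi)
        have h2 : (1:ℤ) ≤ 3 ^ i := one_le_pow₀ (by norm_num)
        omega
      · rw [Finset.mem_singleton] at hj; omega
    · -- generation
      intro x hx
      rw [abs_le] at hx
      obtain ⟨c, y, hc, hxy, hyM⟩ : ∃ c y : ℤ, (c = -1 ∨ c = 0 ∨ c = 1) ∧
          x = y + c * (M - n) ∧ |y| ≤ M := by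
        rcases lt_trichotomy M x with h | h | h
        · exact ⟨-1, x + M - n, by tauto, by ring, abs_le.mpr ⟨by omega, by omega⟩⟩
        · exact ⟨0, x, by tauto, by ring, abs_le.mpr ⟨by omega, by omega⟩⟩
        · rcases lt_or_ge x (-M) with h' | h'
          · exact ⟨1, x - M + n, by tauto, by ring, abs_le.mpr ⟨by omega, by omega⟩⟩
          · exact ⟨0, x, by tauto, by ring, abs_le.mpr ⟨by omega, by omega⟩⟩
      obtain ⟨a, ha1, ha2⟩ := exists_digits k y (by
        have h2 := abs_le.mp hyM
        rcases abs_cases y with h | h <;> rw [h.1] <;> omega)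
      set β : ℤ → ℤ := fun z => if z = M - n then c else a (Nat.log 3 z.toNat) with hβ
      have hβpow : ∀ i : ℕ, β ((3:ℤ)^i) = a i := by
        intro i
        have h1 : (1:ℤ) ≤ 3 ^ i := one_le_pow₀ (by norm_num)
        have hne : (3:ℤ)^i ≠ M - n := by omega
        rw [hβ]
        simp only [if_neg hne]
        congr 1
        rw [show ((3:ℤ)^i) = ((3^i : ℕ) : ℤ) by push_cast; ring, Int.toNat_natCast]
        exact Nat.log_pow (by norm_num) i
      have hβc : β (M - n) = c := by rw [hβ]; simp
      refine ⟨β, ?_, ?_, ?_⟩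
      · intro j hj
        rcases Finset.mem_union.mp hj with hj | hj
        · rw [hT, Finset.mem_image] at hj
          obtain ⟨i, -, rfl⟩ := hj
          rw [hβpow]; exact ha1 i
        · rw [Finset.mem_singleton] at hj; subst hj; rw [hβc]; exact hc
      · rw [Finset.sum_union hdisj, Finset.sum_singleton, hβc, hT,
          Finset.sum_image hinj]
        have : ∑ i ∈ Finset.range k, β ((3:ℤ)^i) * 3^i
            = ∑ i ∈ Finset.range k, a i * 3^i :=
          Finset.sum_congr rfl fun i _ => by rw [hβpow]
        rw [this, ← ha2]; exact hxy
      · rw [Finset.sum_union hdisj, Finset.sum_singleton, hβc, hT,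
          Finset.sum_image hinj]
        have h1 : ∑ i ∈ Finset.range k, |β ((3:ℤ)^i) * 3^i| ≤
            ∑ i ∈ Finset.range k, (3:ℤ)^i := by
          refine Finset.sum_le_sum fun i _ => ?_
          rw [hβpow]
          have h3 : (0:ℤ) ≤ 3^i := by positivity
          rw [abs_mul, abs_of_nonneg h3]
          have : |a i| ≤ 1 := by rcases ha1 i with h|h|h <;> rw [h] <;> norm_num
          calc |a i| * 3^i ≤ 1 * 3^i := mul_le_mul_of_nonneg_right this h3
            _ = 3^i := one_mul _
        have h2 : (∑ i ∈ Finset.range k, (3:ℤ)^i) = M := by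
          have := geom_sum_mul (3:ℤ) k
          omega
        have h3 : |c * (M - n)| ≤ n - M := by
          rcases hc with h|h|h <;> rw [h] <;> rw [abs_le] <;> constructor <;> omega
        omega
    · -- cardinality
      rw [Finset.card_union_of_disjoint hdisj, Finset.card_singleton, hT,
        Finset.card_image_of_injOn hinj, Finset.card_range, hk]

lemma ceil_eq_clog (n : ℤ) (hn : 0 ≤ n) :
    ⌈Real.log (2 * (n : ℝ) + 1) / Real.log 3⌉ = (Nat.clog 3 (2 * n + 1).toNat : ℤ) := by
  have h0 : ((2*n+1).toNat : ℤ) = 2*n+1 := Int.toNat_of_nonneg (by omega)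
  have h1 : Real.log (2 * (n : ℝ) + 1) / Real.log 3
      = Real.logb 3 (((2 * n + 1).toNat : ℕ) : ℝ) := by
    rw [Real.logb]
    congr 2
    rw [show (((2 * n + 1).toNat : ℕ) : ℝ) = ((((2 * n + 1).toNat : ℤ)) : ℝ) by push_cast; ring,
      h0]
    push_cast; ring
  rw [h1, show ((3:ℝ)) = ((3:ℕ):ℝ) by norm_num,
    Real.ceil_logb_natCast (by positivity), Int.clog_natCast]

end Aux

/-- for `n ≥ 0` the minimal cardinality of a set generating at
level `n` equals `⌈log(2n+1)/log 3⌉`: such a generating set exists, and every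
generating set has at least this cardinality. -/
theorem stmt4 (n : ℤ) (hn : 0 ≤ n) :
    (∃ F : Finset ℤ, GeneratesAtLevel n F ∧
      (F.card : ℤ) = ⌈Real.log (2 * (n : ℝ) + 1) / Real.log 3⌉) ∧
    ∀ F : Finset ℤ, GeneratesAtLevel n F →
      ⌈Real.log (2 * (n : ℝ) + 1) / Real.log 3⌉ ≤ (F.card : ℤ) := by
  rw [ceil_eq_clog n hn]
  constructor
  · obtain ⟨F, hF, hcard⟩ := upper n hn
    exact ⟨F, hF, by exact_mod_cast hcard⟩
  · intro F hF
    have h1 := lower n F hF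
    have h2 : Nat.clog 3 (2 * n + 1).toNat ≤ F.card :=
      (Nat.clog_le_iff_le_pow (by norm_num)).mpr h1
    exact_mod_cast h2
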